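/- Let L ≥ 2 be even, x₀ = L/2, B > 0 and v > 0. For t ∈ [0,1/v] let H(t) = H_0 − (1−vt)B S¹_{x₀} − vt B S¹_{x₀+1}, and let E₀(t) denote the lowest eigenvalue of H(t). Then E₀(t) = E₀(1/v − t) for all t ∈ [0, 1/v]. -/

import Mathlib

open Matrix Finset
open scoped ComplexOrder

noncomputable section

/-- Configuration space of a chain of `L` spins-1/2: `ℋ_L = ⊗_{x=1}^L ℂ²`
is identified with functions `Conf L → ℂ`. -/
abbrev Conf (L : ℕ) := Fin L → Fin 2

def S1 : Matrix (Fin 2) (Fin 2) ℂ := !![0, 1/2; 1/2, 0]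
def S2 : Matrix (Fin 2) (Fin 2) ℂ := !![0, -Complex.I/2; Complex.I/2, 0]
def S3 : Matrix (Fin 2) (Fin 2) ℂ := !![1/2, 0; 0, -1/2]

/-- The one-site operator `A` acting on the `x`-th (0-based) tensor factor of `ℋ_L`. -/
def siteOp (L : ℕ) (A : Matrix (Fin 2) (Fin 2) ℂ) (x : ℕ) :
    Matrix (Conf L) (Conf L) ℂ :=
  fun m n =>
    if hx : x < L then
      A (m ⟨x, hx⟩) (n ⟨x, hx⟩) *
        ∏ y ∈ Finset.univ.erase (⟨x, hx⟩ : Fin L), (if m y = n y then 1 else 0)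
    else 0

def q (Δ : ℝ) : ℝ := Δ - Real.sqrt (Δ ^ 2 - 1)

/-- The bond interaction `h_{x,x+1}` (with `x` 0-based). -/
def hBond (L : ℕ) (Δ : ℝ) (x : ℕ) : Matrix (Conf L) (Conf L) ℂ :=
  (-(Δ⁻¹ : ℝ) : ℂ) • (siteOp L S1 x * siteOp L S1 (x + 1) + siteOp L S2 x * siteOp L S2 (x + 1))
    - siteOp L S3 x * siteOp L S3 (x + 1)
    + ((1 / 2 * Real.sqrt (1 - Δ⁻¹ ^ 2) : ℝ) : ℂ) • (siteOp L S3 x - siteOp L S3 (x + 1))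
    + ((1 / 4 : ℝ) : ℂ) • 1

/-- The XXZ kink Hamiltonian `H_0 = ∑_{x=1}^{L-1} h_{x,x+1}`. -/
def H0 (L : ℕ) (Δ : ℝ) : Matrix (Conf L) (Conf L) ℂ :=
  ∑ x ∈ Finset.range (L - 1), hBond L Δ x

/-- The kink state `φ_c` (0-based site `x` corresponds to the paper's site `x+1`). -/
def kink (L : ℕ) (Δ : ℝ) (c : ℂ) : Conf L → ℂ :=
  fun m => ∏ x : Fin L,
    (((1 + ‖c‖ ^ 2 * q Δ ^ (2 * (x.1 + 1))) ^ (-(1 / 2 : ℝ)) : ℝ) : ℂ) *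
      (if m x = 0 then 1 else c * (q Δ : ℂ) ^ (x.1 + 1))

/-- The set of (real) eigenvalues of a matrix. -/
def eigSet {n : Type*} [Fintype n] [DecidableEq n] (H : Matrix n n ℂ) : Set ℝ :=
  {μ : ℝ | ∃ ψ : n → ℂ, ψ ≠ 0 ∧ H.mulVec ψ = (μ : ℂ) • ψ}

/-- The spin-flip + reflection involution on configurations. -/
def flipConf (L : ℕ) : Equiv.Perm (Conf L) where
  toFun m := fun x => (m x.rev).rev
  invFun m := fun x => (m x.rev).rev
  left_inv m := by funext x; simp
  right_inv m := by funext x; simp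

lemma flipConf_symm (L : ℕ) : (flipConf L).symm = flipConf L := rfl

lemma siteOp_submatrix {L : ℕ} (A : Matrix (Fin 2) (Fin 2) ℂ) (ε : ℂ)
    (hA : ∀ a b : Fin 2, A a.rev b.rev = ε * A a b) (x : ℕ) (hx : x < L) :
    (siteOp L A x).submatrix (flipConf L) (flipConf L) = ε • siteOp L A (L - 1 - x) := by
  have hx' : L - 1 - x < L := by omega
  have hrev : (⟨x, hx⟩ : Fin L).rev = ⟨L - 1 - x, hx'⟩ := by
    ext; simp [Fin.rev]; omega
  ext m n
  simp only [submatrix_apply, Matrix.smul_apply, siteOp, dif_pos hx, dif_pos hx']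
  show A ((m (⟨x, hx⟩ : Fin L).rev).rev) ((n (⟨x, hx⟩ : Fin L).rev).rev) * _ = _
  rw [hA, hrev]
  have hprod : (∏ y ∈ Finset.univ.erase (⟨x, hx⟩ : Fin L),
      (if (flipConf L m) y = (flipConf L n) y then (1:ℂ) else 0))
      = ∏ y ∈ Finset.univ.erase (⟨L - 1 - x, hx'⟩ : Fin L), (if m y = n y then (1:ℂ) else 0) := by
    have h1 : ∀ y : Fin L, (if (flipConf L m) y = (flipConf L n) y then (1:ℂ) else 0)
        = (if m y.rev = n y.rev then (1:ℂ) else 0) := by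
      intro y
      simp only [flipConf, Equiv.coe_fn_mk]
      congr 1
      simp [Fin.rev_inj, eq_iff_iff]
    rw [Finset.prod_congr rfl (fun y _ => h1 y)]
    refine Finset.prod_nbij' Fin.rev Fin.rev ?_ ?_ ?_ ?_ ?_
    · intro a ha
      rw [Finset.mem_erase] at *
      exact ⟨by rw [← hrev]; exact fun h => ha.1 (Fin.rev_inj.mp h), Finset.mem_univ _⟩
    · intro a ha
      rw [Finset.mem_erase] at *
      refine ⟨fun h => ha.1 ?_, Finset.mem_univ _⟩
      rw [← hrev, ← h, Fin.rev_rev]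
    · intro a _; exact Fin.rev_rev a
    · intro a _; exact Fin.rev_rev a
    · intro a _; rfl
  rw [hprod, smul_eq_mul]; ring

lemma S1_rev (a b : Fin 2) : S1 a.rev b.rev = 1 * S1 a b := by
  fin_cases a <;> fin_cases b <;> simp [S1, Fin.rev]

lemma S2_rev (a b : Fin 2) : S2 a.rev b.rev = (-1) * S2 a b := by
  fin_cases a <;> fin_cases b <;> simp [S2, Fin.rev] <;> ring

lemma S3_rev (a b : Fin 2) : S3 a.rev b.rev = (-1) * S3 a b := by
  fin_cases a <;> fin_cases b <;> simp [S3, Fin.rev] <;> norm_num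

lemma siteOp_mul_apply {L : ℕ} (A B : Matrix (Fin 2) (Fin 2) ℂ) (x y : Fin L) (hxy : x ≠ y)
    (m n : Conf L) :
    (siteOp L A x.1 * siteOp L B y.1) m n =
      A (m x) (n x) * B (m y) (n y) *
        ∏ z ∈ (Finset.univ.erase x).erase y, (if m z = n z then (1:ℂ) else 0) := by
  have hx : x.1 < L := x.isLt
  have hy : y.1 < L := y.isLt
  have hxx : (⟨x.1, hx⟩ : Fin L) = x := rfl
  have hyy : (⟨y.1, hy⟩ : Fin L) = y := rfl
  rw [Matrix.mul_apply]
  rw [Finset.sum_eq_single (Function.update m x (n x))]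
  · simp only [siteOp, dif_pos hx, dif_pos hy, hxx, hyy]
    rw [Function.update_self, Function.update_of_ne (Ne.symm hxy)]
    have h1 : (∏ z ∈ Finset.univ.erase x,
        (if m z = Function.update m x (n x) z then (1:ℂ) else 0)) = 1 := by
      apply Finset.prod_eq_one
      intro z hz
      rw [Function.update_of_ne (Finset.ne_of_mem_erase hz)]
      simp
    have h2 : (∏ z ∈ Finset.univ.erase y,
        (if Function.update m x (n x) z = n z then (1:ℂ) else 0))
        = ∏ z ∈ (Finset.univ.erase x).erase y, (if m z = n z then (1:ℂ) else 0) := by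
      have hxmem : x ∈ Finset.univ.erase y := Finset.mem_erase.mpr ⟨hxy, Finset.mem_univ _⟩
      rw [← Finset.mul_prod_erase _ _ hxmem, Function.update_self, if_pos rfl, one_mul,
        Finset.erase_right_comm]
      apply Finset.prod_congr rfl
      intro z hz
      rw [Function.update_of_ne (Finset.ne_of_mem_erase (Finset.mem_of_mem_erase
        (by rwa [Finset.erase_right_comm] at hz)))]
    rw [h1, h2]; ring
  · intro k _ hk
    by_cases hkx : k x = n x
    · have : ∃ z, z ≠ x ∧ k z ≠ m z := by
        by_contra hcon
        push_neg at hcon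
        apply hk
        funext z
        by_cases hzx : z = x
        · subst hzx; rw [Function.update_self]; exact hkx
        · rw [Function.update_of_ne hzx]; exact hcon z hzx
      obtain ⟨z, hzx, hzm⟩ := this
      have : siteOp L A x.1 m k = 0 := by
        simp only [siteOp, dif_pos hx, hxx]
        rw [Finset.prod_eq_zero (i := z) (Finset.mem_erase.mpr ⟨hzx, Finset.mem_univ _⟩)
          (by rw [if_neg (fun h => hzm h.symm)]), mul_zero]
      rw [this, zero_mul]
    · have : siteOp L B y.1 k n = 0 := by
        simp only [siteOp, dif_pos hy, hyy]
        rw [Finset.prod_eq_zero (i := x) (Finset.mem_erase.mpr ⟨hxy, Finset.mem_univ _⟩)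
          (by rw [if_neg hkx]), mul_zero]
      rw [this, mul_zero]
  · intro h; exact absurd (Finset.mem_univ _) h

lemma siteOp_comm {L : ℕ} (A B : Matrix (Fin 2) (Fin 2) ℂ) (x y : ℕ)
    (hx : x < L) (hy : y < L) (hxy : x ≠ y) :
    siteOp L A x * siteOp L B y = siteOp L B y * siteOp L A x := by
  ext m n
  have h : (⟨x, hx⟩ : Fin L) ≠ ⟨y, hy⟩ := by simp [Fin.ext_iff, hxy]
  rw [show x = (⟨x, hx⟩ : Fin L).1 from rfl, show y = (⟨y, hy⟩ : Fin L).1 from rfl,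
    siteOp_mul_apply A B _ _ h, siteOp_mul_apply B A _ _ (Ne.symm h),
    Finset.erase_right_comm]
  ring

lemma submatrix_mul_flip {L : ℕ} (M N : Matrix (Conf L) (Conf L) ℂ) :
    (M * N).submatrix (flipConf L) (flipConf L)
      = M.submatrix (flipConf L) (flipConf L) * N.submatrix (flipConf L) (flipConf L) :=
  (Matrix.submatrix_mul_equiv M N _ (flipConf L) _).symm

lemma submatrix_sum' {L : ℕ} {ι : Type*} (s : Finset ι) (f : ι → Matrix (Conf L) (Conf L) ℂ) :
    (∑ i ∈ s, f i).submatrix (flipConf L) (flipConf L)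
      = ∑ i ∈ s, (f i).submatrix (flipConf L) (flipConf L) := by
  ext m n
  simp [Matrix.sum_apply]

lemma hBond_submatrix {L : ℕ} (Δ : ℝ) (x : ℕ) (hx : x + 1 < L) :
    (hBond L Δ x).submatrix (flipConf L) (flipConf L) = hBond L Δ (L - 2 - x) := by
  have hx0 : x < L := by omega
  have e1 : L - 1 - x = (L - 2 - x) + 1 := by omega
  have e2 : L - 1 - (x + 1) = L - 2 - x := by omega
  have hne : (L - 2 - x) + 1 ≠ L - 2 - x := by omega
  have h1 : L - 2 - x < L := by omega
  have h2 : (L - 2 - x) + 1 < L := by omega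
  simp only [hBond, Matrix.submatrix_add, Matrix.submatrix_sub, Matrix.submatrix_smul,
    submatrix_mul_flip,
    siteOp_submatrix S1 1 S1_rev x hx0, siteOp_submatrix S1 1 S1_rev (x+1) hx,
    siteOp_submatrix S2 (-1) S2_rev x hx0, siteOp_submatrix S2 (-1) S2_rev (x+1) hx,
    siteOp_submatrix S3 (-1) S3_rev x hx0, siteOp_submatrix S3 (-1) S3_rev (x+1) hx,
    e1, e2, Pi.add_apply, Pi.sub_apply, Pi.smul_apply,
    Matrix.submatrix_one_equiv (flipConf L)]
  simp only [one_smul, neg_smul, smul_mul_assoc, mul_smul_comm, smul_smul, neg_neg,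
    neg_mul, mul_neg, one_mul]
  rw [siteOp_comm S1 S1 _ _ h2 h1 hne, siteOp_comm S2 S2 _ _ h2 h1 hne,
    siteOp_comm S3 S3 _ _ h2 h1 hne]
  module

lemma H0_submatrix {L : ℕ} (Δ : ℝ) :
    (H0 L Δ).submatrix (flipConf L) (flipConf L) = H0 L Δ := by
  unfold H0
  rw [submatrix_sum']
  refine Finset.sum_nbij' (fun x => L - 2 - x) (fun x => L - 2 - x) ?_ ?_ ?_ ?_ ?_ <;>
    intro a ha <;> simp only [Finset.mem_range] at *
  · omega
  · omega
  · omega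
  · omega
  · exact hBond_submatrix Δ a (by omega)

lemma eigSet_submatrix_subset {n : Type*} [Fintype n] [DecidableEq n]
    (H : Matrix n n ℂ) (e : Equiv.Perm n) :
    eigSet H ⊆ eigSet (H.submatrix e e) := by
  rintro μ ⟨ψ, hψ, hev⟩
  refine ⟨ψ ∘ e, fun h0 => hψ ?_, ?_⟩
  · funext i
    have := congrFun h0 (e.symm i)
    simpa using this
  · rw [Matrix.submatrix_mulVec_equiv]
    have h : (ψ ∘ ⇑e) ∘ ⇑e.symm = ψ := by funext i; simp
    rw [h, hev]
    rfl

lemma eigSet_submatrix {n : Type*} [Fintype n] [DecidableEq n]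
    (H : Matrix n n ℂ) (e : Equiv.Perm n) :
    eigSet (H.submatrix e e) = eigSet H := by
  refine le_antisymm ?_ (eigSet_submatrix_subset H e)
  have h := eigSet_submatrix_subset (H.submatrix e e) e.symm
  rwa [Matrix.submatrix_submatrix, Equiv.self_comp_symm, Matrix.submatrix_id_id] at h

/-- Euclidean norm of `𝐁(x) ∈ ℝ³`. -/
def bnorm (b : Fin 3 → ℝ) : ℝ := Real.sqrt (b 0 ^ 2 + b 1 ^ 2 + b 2 ^ 2)

/-- The magnetic field term `𝐁(x)·𝐒_x` at (0-based) site `x`. -/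
def fieldOp (L : ℕ) (b : Fin 3 → ℝ) (x : ℕ) : Matrix (Conf L) (Conf L) ℂ :=
  (b 0 : ℂ) • siteOp L S1 x + (b 1 : ℂ) • siteOp L S2 x + (b 2 : ℂ) • siteOp L S3 x

/-- for even `L`, `x₀ = L/2`, and
`H(t) = H_0 − (1−vt)B S¹_{x₀} − vt B S¹_{x₀+1}` (0-based site indices `L/2 - 1, L/2`),
the lowest eigenvalue satisfies the symmetry `E₀(t) = E₀(1/v − t)` on `[0, 1/v]`. -/
theorem ground_energy_symmetric
    (L : ℕ) (hL : 2 ≤ L) (hLeven : Even L) (Δ : ℝ) (hΔ : 1 < Δ)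
    (B v : ℝ) (hB : 0 < B) (hv : 0 < v)
    (E₀ : ℝ → ℝ)
    (hE₀ : ∀ t ∈ Set.Icc (0 : ℝ) (1 / v),
      IsLeast (eigSet (H0 L Δ
        - (((1 - v * t) * B : ℝ) : ℂ) • siteOp L S1 (L / 2 - 1)
        - ((v * t * B : ℝ) : ℂ) • siteOp L S1 (L / 2))) (E₀ t)) :
    ∀ t ∈ Set.Icc (0 : ℝ) (1 / v), E₀ t = E₀ (1 / v - t) := by
  intro t ht
  obtain ⟨ht0, ht1⟩ := ht
  have hvne : v ≠ 0 := ne_of_gt hv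
  obtain ⟨k, hk⟩ := hLeven
  set t' : ℝ := 1 / v - t with ht'def
  have ht' : t' ∈ Set.Icc (0 : ℝ) (1 / v) := ⟨by rw [ht'def]; linarith, by rw [ht'def]; linarith⟩
  have hx1 : L / 2 - 1 < L := by omega
  have hx2 : L / 2 < L := by omega
  have heq1 : L - 1 - (L / 2 - 1) = L / 2 := by omega
  have heq2 : L - 1 - (L / 2) = L / 2 - 1 := by omega
  have hc1 : (((1 - v * t') * B : ℝ) : ℂ) = ((v * t * B : ℝ) : ℂ) := by
    congr 1
    rw [ht'def, mul_sub, mul_one_div_cancel hvne]; ring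
  have hc2 : ((v * t' * B : ℝ) : ℂ) = (((1 - v * t) * B : ℝ) : ℂ) := by
    congr 1
    rw [ht'def, mul_sub, mul_one_div_cancel hvne]
  have hconj : (H0 L Δ
        - (((1 - v * t) * B : ℝ) : ℂ) • siteOp L S1 (L / 2 - 1)
        - ((v * t * B : ℝ) : ℂ) • siteOp L S1 (L / 2)).submatrix (flipConf L) (flipConf L)
      = H0 L Δ
        - (((1 - v * t') * B : ℝ) : ℂ) • siteOp L S1 (L / 2 - 1)
        - ((v * t' * B : ℝ) : ℂ) • siteOp L S1 (L / 2) := by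
    simp only [Matrix.submatrix_sub, Matrix.submatrix_smul, Pi.sub_apply, Pi.smul_apply,
      H0_submatrix Δ,
      siteOp_submatrix S1 1 S1_rev (L / 2 - 1) hx1,
      siteOp_submatrix S1 1 S1_rev (L / 2) hx2, heq1, heq2, one_smul, hc1, hc2]
    rw [sub_sub, sub_sub, add_comm]
  have hsets : eigSet (H0 L Δ
        - (((1 - v * t') * B : ℝ) : ℂ) • siteOp L S1 (L / 2 - 1)
        - ((v * t' * B : ℝ) : ℂ) • siteOp L S1 (L / 2))
      = eigSet (H0 L Δ
        - (((1 - v * t) * B : ℝ) : ℂ) • siteOp L S1 (L / 2 - 1)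
        - ((v * t * B : ℝ) : ℂ) • siteOp L S1 (L / 2)) := by
    rw [← hconj, eigSet_submatrix]
  have h1 := hE₀ t ⟨ht0, ht1⟩
  have h2 := hE₀ t' ht'
  rw [hsets] at h2
  exact h1.unique h2
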